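/- arXiv:0811.1570 — 3 statements merged into one kernel-verified Lean document; each statement's English description precedes it below -/
import Mathlib

section
/- Lengthening subsystem codes: If there exists an ((n,K,R,d))_q Clifford subsystem code with K > 1, then there exists an ((n+1, K, R, d'))_q Clifford subsystem code with minimum distance d' ≥ d that is pure to 1. -/
open Finset
set_option linter.unusedSectionVars false

/-- Symplectic weight of a vector `(a|b) ∈ F_q^n × F_q^n`. -/
noncomputable def swt {F : Type} [Field F] {n : ℕ} (v : (Fin n → F) × (Fin n → F)) : ℕ :=
  {i : Fin n | ¬(v.1 i = 0 ∧ v.2 i = 0)}.ncard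

/-- Minimum symplectic weight of a nonzero element of a set. -/
noncomputable def minSwt {F : Type} [Field F] {n : ℕ} (S : Set ((Fin n → F) × (Fin n → F))) : ℕ :=
  sInf (swt '' (S \ {0}))

/-- The trace-symplectic form on `F_q^{2n}`. -/
noncomputable def trSympForm (p : ℕ) {F : Type} [Field F] [Fintype F] [CharP F p] {n : ℕ}
    (u v : (Fin n → F) × (Fin n → F)) : ZMod p :=
  letI := ZMod.algebra F p
  Algebra.trace (ZMod p) F (∑ i, (v.1 i * u.2 i - u.1 i * v.2 i))

/-- The trace-symplectic dual of a set of vectors in `F_q^{2n}`. -/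
def sympDual (p : ℕ) {F : Type} [Field F] [Fintype F] [CharP F p] {n : ℕ}
    (C : Set ((Fin n → F) × (Fin n → F))) : Set ((Fin n → F) × (Fin n → F)) :=
  {v | ∀ w ∈ C, trSympForm p v w = 0}

/-- `C` (an additive code in `F_q^{2n}`) defines an `((n,K,R,d))_q` Clifford subsystem code. -/
def IsSubsysCode (p : ℕ) {F : Type} [Field F] [Fintype F] [CharP F p] {n : ℕ}
    (C : AddSubgroup ((Fin n → F) × (Fin n → F))) (K R d : ℕ) : Prop :=
  let Ds : Set ((Fin n → F) × (Fin n → F)) := ↑C ∩ sympDual p ↑C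
  Nat.card Ds * (K * R) = Fintype.card F ^ n ∧
  Nat.card C * K = Fintype.card F ^ n * R ∧
  (sympDual p Ds = ↑C → d = minSwt (sympDual p Ds)) ∧
  (sympDual p Ds ≠ ↑C → d = minSwt (sympDual p Ds \ ↑C))

/-- The subsystem code defined by `C` is pure to `d'`. -/
def PureTo {F : Type} [Field F] {n : ℕ}
    (C : AddSubgroup ((Fin n → F) × (Fin n → F))) (d' : ℕ) : Prop :=
  ∀ v ∈ C, v ≠ 0 → d' ≤ swt v

/-- The subsystem code defined by `C` is `F_q`-linear. -/
def FqLinear {F : Type} [Field F] {n : ℕ}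
    (C : AddSubgroup ((Fin n → F) × (Fin n → F))) : Prop :=
  ∀ (a : F), ∀ v ∈ C, a • v ∈ C

/-- Hamming weight.-/
noncomputable def hwt {F : Type} [Field F] {n : ℕ} (v : Fin n → F) : ℕ := {i | v i ≠ 0}.ncard

/-- Minimum Hamming weight of a nonzero element of a set. -/
noncomputable def minHwt {F : Type} [Field F] {n : ℕ} (S : Set (Fin n → F)) : ℕ :=
  sInf (hwt '' (S \ {0}))

/-- Euclidean dual. -/
def euclDual {F : Type} [Field F] {n : ℕ} (C : Set (Fin n → F)) : Set (Fin n → F) :=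
  {x | ∀ y ∈ C, ∑ i, x i * y i = 0}

/-- Hermitian dual (with respect to `x ↦ x^q`). -/
def hermDual (q : ℕ) {K : Type} [Field K] {n : ℕ} (C : Set (Fin n → K)) : Set (Fin n → K) :=
  {x | ∀ y ∈ C, ∑ i, x i ^ q * y i = 0}

/-- Cyclotomic coset of `a` modulo `n` (w.r.t. multiplier `q`). -/
def cycCoset (q n : ℕ) (a : ZMod n) : Set (ZMod n) := {x | ∃ i : ℕ, x = a * (q : ZMod n) ^ i}

namespace Lsc

abbrev V (F : Type) (n : ℕ) := (Fin n → F) × (Fin n → F)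

variable {p : ℕ} {F : Type} [Field F] [Fintype F] [CharP F p] {n : ℕ}

/-- The trace to the prime field, as used in `trSympForm`. -/
noncomputable def trF (p : ℕ) {F : Type} [Field F] [Fintype F] [CharP F p] (c : F) : ZMod p :=
  letI := ZMod.algebra F p
  Algebra.trace (ZMod p) F c

lemma trSympForm_def (u v : V F n) :
    trSympForm p u v = trF p (∑ i, (v.1 i * u.2 i - u.1 i * v.2 i)) := rfl

lemma trF_add (a b : F) : trF p (a + b) = trF p a + trF p b := by
  unfold trF; exact map_add _ a b

lemma trF_zero : trF p (0 : F) = 0 := by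
  unfold trF; exact map_zero _

lemma trF_neg (a : F) : trF p (-a) = -trF p a := by
  unfold trF; exact map_neg _ a

/-- restriction to the first `n` coordinates -/
def resv (w : V F (n + 1)) : V F n :=
  (fun i => w.1 i.castSucc, fun i => w.2 i.castSucc)

lemma trF_nondeg [Fact p.Prime] {c : F} (h : ∀ x : F, trF p (x * c) = 0) : c = 0 := by
  letI := ZMod.algebra F p
  by_contra hc
  haveI : FiniteDimensional (ZMod p) F := Module.Finite.of_finite
  haveI : Algebra.IsAlgebraic (ZMod p) F := Algebra.IsAlgebraic.of_finite _ _
  haveI : Algebra.IsSeparable (ZMod p) F := inferInstance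
  have hnd := (traceForm_nondegenerate (ZMod p) F).1 c
  apply hc
  apply hnd
  intro x
  rw [Algebra.traceForm_apply]
  rw [mul_comm]
  exact h x

lemma trSympForm_add_left (u u' v : V F n) :
    trSympForm p (u + u') v = trSympForm p u v + trSympForm p u' v := by
  simp only [trSympForm_def, ← trF_add, ← Finset.sum_add_distrib]
  congr 1
  apply Finset.sum_congr rfl
  intro i _
  simp only [Prod.fst_add, Prod.snd_add, Pi.add_apply]
  ring

lemma trSympForm_add_right (u v v' : V F n) :
    trSympForm p u (v + v') = trSympForm p u v + trSympForm p u v' := by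
  simp only [trSympForm_def, ← trF_add, ← Finset.sum_add_distrib]
  congr 1
  apply Finset.sum_congr rfl
  intro i _
  simp only [Prod.fst_add, Prod.snd_add, Pi.add_apply]
  ring

lemma trSympForm_zero_left (v : V F n) : trSympForm p 0 v = 0 := by
  simp only [trSympForm_def]
  rw [show (∑ i, (v.1 i * (0 : V F n).2 i - (0 : V F n).1 i * v.2 i)) = 0 by simp]
  exact trF_zero

lemma trSympForm_zero_right (v : V F n) : trSympForm p v 0 = 0 := by
  simp only [trSympForm_def]
  rw [show (∑ i, ((0 : V F n).1 i * v.2 i - v.1 i * (0 : V F n).2 i)) = 0 by simp]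
  exact trF_zero

lemma trSympForm_neg_left (u v : V F n) : trSympForm p (-u) v = -trSympForm p u v := by
  simp only [trSympForm_def, ← trF_neg, ← Finset.sum_neg_distrib]
  congr 1
  apply Finset.sum_congr rfl
  intro i _
  simp only [Prod.fst_neg, Prod.snd_neg, Pi.neg_apply]
  ring

lemma trSympForm_antisymm (u v : V F n) : trSympForm p u v = -trSympForm p v u := by
  simp only [trSympForm_def, ← trF_neg, ← Finset.sum_neg_distrib]
  congr 1
  apply Finset.sum_congr rfl
  intro i _
  ring

lemma trSympForm_split (u v : V F (n + 1)) :
    trSympForm p u v = trSympForm p (resv u) (resv v) +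
      trF p (v.1 (Fin.last n) * u.2 (Fin.last n) - u.1 (Fin.last n) * v.2 (Fin.last n)) := by
  simp only [trSympForm_def, resv]
  rw [Fin.sum_univ_castSucc, trF_add]



-- from aux1
lemma one_le_swt {v : V F n} (hv : v ≠ 0) : 1 ≤ swt v := by
  have h : {i : Fin n | ¬(v.1 i = 0 ∧ v.2 i = 0)}.Nonempty := by
    by_contra hc
    rw [Set.not_nonempty_iff_eq_empty, Set.eq_empty_iff_forall_notMem] at hc
    apply hv
    refine Prod.ext (funext fun i => ?_) (funext fun i => ?_)
    · have := hc i; simp only [Set.mem_setOf_eq, not_not] at this; exact this.1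
    · have := hc i; simp only [Set.mem_setOf_eq, not_not] at this; exact this.2
  exact (Set.ncard_pos (Set.toFinite _)).mpr h

lemma swt_resv_le (w : V F (n + 1)) : swt (resv w) ≤ swt w := by
  unfold swt resv
  have h1 : Fin.castSucc '' {i : Fin n | ¬(w.1 i.castSucc = 0 ∧ w.2 i.castSucc = 0)}
      ⊆ {i : Fin (n+1) | ¬(w.1 i = 0 ∧ w.2 i = 0)} := by
    rintro j ⟨i, hi, rfl⟩; exact hi
  calc {i : Fin n | ¬(w.1 i.castSucc = 0 ∧ w.2 i.castSucc = 0)}.ncard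
      = (Fin.castSucc '' {i : Fin n | ¬(w.1 i.castSucc = 0 ∧ w.2 i.castSucc = 0)}).ncard := by
        rw [Set.ncard_image_of_injective _ (Fin.castSucc_injective n)]
    _ ≤ _ := Set.ncard_le_ncard h1 (Set.toFinite _)

def liftSet (S : Set (V F n)) : Set (V F (n + 1)) :=
  {w | resv w ∈ S ∧ w.2 (Fin.last n) = 0}

def emb (s : V F n) (x : F) : V F (n + 1) := (Fin.snoc s.1 x, Fin.snoc s.2 0)

@[simp] lemma resv_emb (s : V F n) (x : F) : resv (emb s x) = s := by
  refine Prod.ext (funext fun i => ?_) (funext fun i => ?_) <;>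
    simp [resv, emb, Fin.snoc_castSucc]

lemma emb_mem {S : Set (V F n)} {s : V F n} (hs : s ∈ S) (x : F) :
    emb s x ∈ liftSet S := by
  refine ⟨by simpa using hs, ?_⟩
  simp [emb, Fin.snoc_last]

lemma liftSet_inter (S T : Set (V F n)) :
    liftSet S ∩ liftSet T = liftSet (S ∩ T) := by
  ext w; unfold liftSet; constructor
  · rintro ⟨⟨h1, h2⟩, ⟨h3, _⟩⟩; exact ⟨⟨h1, h3⟩, h2⟩
  · rintro ⟨⟨h1, h3⟩, h2⟩; exact ⟨⟨h1, h2⟩, ⟨h3, h2⟩⟩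

lemma liftSet_inj {S T : Set (V F n)} (h : liftSet S = liftSet T) : S = T := by
  ext s
  have h2 : ∀ (U : Set (V F n)), emb s 0 ∈ liftSet U ↔ s ∈ U := by
    intro U
    constructor
    · rintro ⟨hm, -⟩; simpa using hm
    · intro hm; exact emb_mem hm 0
  have h1 : emb s 0 ∈ liftSet S ↔ emb s 0 ∈ liftSet T := by rw [h]
  rw [h2, h2] at h1; exact h1

-- new material
lemma resv_add (u v : V F (n + 1)) : resv (u + v) = resv u + resv v := rfl
lemma resv_neg (u : V F (n + 1)) : resv (-u) = -resv u := rfl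
lemma resv_zero : resv (0 : V F (n + 1)) = 0 := rfl

/-- the lift of an additive code -/
def liftGrp (C : AddSubgroup (V F n)) : AddSubgroup (V F (n + 1)) where
  carrier := liftSet ↑C
  zero_mem' := ⟨by rw [resv_zero]; exact C.zero_mem, rfl⟩
  add_mem' := by
    rintro a b ⟨ha1, ha2⟩ ⟨hb1, hb2⟩
    refine ⟨?_, ?_⟩
    · rw [resv_add]; exact C.add_mem ha1 hb1
    · show (a + b).2 (Fin.last n) = 0
      rw [Prod.snd_add, Pi.add_apply, ha2, hb2, add_zero]
  neg_mem' := by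
    rintro a ⟨ha1, ha2⟩
    refine ⟨?_, ?_⟩
    · rw [resv_neg]; exact C.neg_mem ha1
    · show (-a).2 (Fin.last n) = 0
      rw [Prod.snd_neg, Pi.neg_apply, ha2, neg_zero]

lemma liftGrp_coe (C : AddSubgroup (V F n)) : (↑(liftGrp C) : Set (V F (n + 1))) = liftSet ↑C := rfl

/-- the symplectic dual of any set is an additive group -/
def sympDualGrp (p : ℕ) {F : Type} [Field F] [Fintype F] [CharP F p] {n : ℕ}
    (S : Set (V F n)) : AddSubgroup (V F n) where
  carrier := sympDual p S
  zero_mem' := fun w _ => trSympForm_zero_left w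
  add_mem' := by
    intro a b ha hb w hw
    rw [trSympForm_add_left, ha w hw, hb w hw, add_zero]
  neg_mem' := by
    intro a ha w hw
    rw [trSympForm_neg_left, ha w hw, neg_zero]

lemma trSympForm_emb_right (v : V F (n + 1)) (s : V F n) (x : F) :
    trSympForm p v (emb s x) = trSympForm p (resv v) s + trF p (x * v.2 (Fin.last n)) := by
  rw [trSympForm_split, resv_emb]
  congr 2
  simp [emb]

/-- key duality lemma for lifting -/
lemma sympDual_liftSet [Fact p.Prime] {S : Set (V F n)} (h0 : (0 : V F n) ∈ S) :
    sympDual p (liftSet S) = liftSet (sympDual p S) := by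
  ext v
  constructor
  · intro hv
    have hlast : v.2 (Fin.last n) = 0 := by
      apply trF_nondeg (p := p)
      intro x
      have := hv (emb 0 x) (emb_mem h0 x)
      rwa [trSympForm_emb_right, trSympForm_zero_right, zero_add] at this
    refine ⟨?_, hlast⟩
    intro s hs
    have := hv (emb s 0) (emb_mem hs 0)
    rwa [trSympForm_emb_right, zero_mul, trF_zero, add_zero] at this
  · rintro ⟨hv1, hv2⟩ w ⟨hw1, hw2⟩
    rw [trSympForm_split, hv1 (resv w) hw1, hw2, hv2, mul_zero, mul_zero, sub_zero,
      trF_zero, add_zero]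

lemma subset_sympDual_of (C : AddSubgroup (V F n)) :
    (↑C : Set (V F n)) ⊆ sympDual p (↑C ∩ sympDual p ↑C) := by
  intro v hv w hw
  rw [trSympForm_antisymm, hw.2 v hv, neg_zero]



lemma card_V : Nat.card (V F n) = Fintype.card F ^ n * Fintype.card F ^ n := by
  simp [Nat.card_eq_fintype_card, Fintype.card_prod]

lemma card_dual_bound' [Fact p.Prime] [Module (ZMod p) (V F n)] (S : AddSubgroup (V F n)) :
    Fintype.card F ^ n * Fintype.card F ^ n ≤
      Nat.card (sympDual p (↑S : Set (V F n))) * Nat.card S := by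
  set S' : Submodule (ZMod p) (V F n) := AddSubgroup.toZModSubmodule p S with hS'
  let D := Module.Dual (ZMod p) ↥S'
  haveI : Finite D := Finite.of_injective
    (fun f : D => (f : ↥S' → ZMod p)) DFunLike.coe_injective
  let Φin : V F n → (↥S' →+ ZMod p) := fun v => AddMonoidHom.mk'
    (fun w : ↥S' => trSympForm p v w.1)
    (fun w w' => trSympForm_add_right v w.1 w'.1)
  let Φ : V F n →+ D := AddMonoidHom.mk'
    (fun v => AddMonoidHom.toZModLinearMap p (Φin v))
    (fun v v' => by
      apply LinearMap.ext
      intro w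
      show trSympForm p (v + v') w.1 = trSympForm p v w.1 + trSympForm p v' w.1
      exact trSympForm_add_left v v' w.1)
  have hcard : Nat.card (V F n) = Nat.card (V F n ⧸ Φ.ker) * Nat.card Φ.ker :=
    AddSubgroup.card_eq_card_quotient_mul_card_addSubgroup _
  have hquot : Nat.card (V F n ⧸ Φ.ker) = Nat.card Φ.range :=
    Nat.card_congr (QuotientAddGroup.quotientKerEquivRange Φ).toEquiv
  have hrange : Nat.card Φ.range ≤ Nat.card D :=
    Nat.card_le_card_of_injective (Subtype.val : Φ.range → D) Subtype.val_injective
  haveI : FiniteDimensional (ZMod p) ↥S' := Module.Finite.of_finite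
  haveI := Classical.decEq ↑(Module.Basis.ofVectorSpaceIndex (ZMod p) ↥S')
  have hD : Nat.card D = Nat.card ↥S' :=
    (Nat.card_congr (Module.Basis.ofVectorSpace (ZMod p) ↥S').toDualEquiv.toEquiv).symm
  have hker : (Φ.ker : Set (V F n)) = sympDual p (↑S : Set (V F n)) := by
    ext v
    constructor
    · intro hv w hw
      have h0 : Φ v = 0 := hv
      have := congrArg (fun f => f ⟨w, hw⟩) h0
      exact this
    · intro hv
      show Φ v = 0
      apply LinearMap.ext
      intro w
      exact hv w.1 w.2
  have hkcard : Nat.card Φ.ker = Nat.card (sympDual p (↑S : Set (V F n))) :=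
    Nat.card_congr (Equiv.setCongr hker)
  have hS'card : Nat.card ↥S' = Nat.card S := rfl
  calc Fintype.card F ^ n * Fintype.card F ^ n
      = Nat.card (V F n) := card_V.symm
    _ = Nat.card (V F n ⧸ Φ.ker) * Nat.card Φ.ker := hcard
    _ = Nat.card Φ.range * Nat.card Φ.ker := by rw [hquot]
    _ ≤ Nat.card D * Nat.card Φ.ker := Nat.mul_le_mul_right _ hrange
    _ = Nat.card (sympDual p (↑S : Set (V F n))) * Nat.card S := by
        rw [hD, hkcard, hS'card, mul_comm]

lemma card_dual_bound [Fact p.Prime] (S : AddSubgroup (V F n)) :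
    Fintype.card F ^ n * Fintype.card F ^ n ≤
      Nat.card (sympDual p (↑S : Set (V F n))) * Nat.card S := by
  have hp0 : ∀ x : V F n, p • x = 0 := by
    intro x
    refine Prod.ext ?_ ?_ <;> funext i <;>
      simp [Prod.smul_fst, Prod.smul_snd, Pi.smul_apply, nsmul_eq_mul,
        CharP.cast_eq_zero F p]
  letI : Module (ZMod p) (V F n) := AddCommGroup.zmodModule hp0
  exact card_dual_bound' S



lemma card_liftSet (S : Set (V F n)) :
    Nat.card (liftSet S) = Nat.card S * Fintype.card F := by
  have e : liftSet S ≃ S × F := {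
    toFun := fun w => (⟨resv w.1, w.2.1⟩, w.1.1 (Fin.last n))
    invFun := fun s => ⟨emb s.1.1 s.2, emb_mem s.1.2 s.2⟩
    left_inv := by
      rintro ⟨w, hw1, hw2⟩
      apply Subtype.ext
      show emb (resv w) (w.1 (Fin.last n)) = w
      refine Prod.ext (funext fun i => ?_) (funext fun i => ?_) <;>
        refine Fin.lastCases ?_ (fun j => ?_) i
      · simp [emb, Fin.snoc_last]
      · simp [emb, resv, Fin.snoc_castSucc]
      · simp [emb, Fin.snoc_last, hw2.symm]
      · simp [emb, resv, Fin.snoc_castSucc]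
    right_inv := by
      rintro ⟨⟨s, hs⟩, x⟩
      refine Prod.ext (Subtype.ext ?_) ?_
      · show resv (emb s x) = s
        exact resv_emb s x
      · show (emb s x).1 (Fin.last n) = x
        simp [emb, Fin.snoc_last] }
  rw [Nat.card_congr e, Nat.card_prod, Nat.card_eq_fintype_card (α := F)]

lemma card_liftGrp (C : AddSubgroup (V F n)) :
    Nat.card (liftGrp C) = Nat.card C * Fintype.card F := by
  have h : Nat.card (liftGrp C) = Nat.card (liftSet (↑C : Set (V F n))) := rfl
  rw [h, card_liftSet, SetLike.coe_sort_coe]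

end Lsc

/-- Lengthening subsystem codes.  If there exists an
`((n,K,R,d))_q` Clifford subsystem code with `K > 1`, then there exists an
`((n+1, K, R, d'))_q` Clifford subsystem code with `d' ≥ d` that is pure to 1. -/
theorem lengthening_subsystem_codes
    (p : ℕ) (hp : p.Prime) (F : Type) [Field F] [Fintype F] [CharP F p]
    (n K R d : ℕ) (hK : 1 < K)
    (h : ∃ C : AddSubgroup ((Fin n → F) × (Fin n → F)), IsSubsysCode p C K R d) :
    ∃ d' : ℕ, d ≤ d' ∧
      ∃ C : AddSubgroup ((Fin (n + 1) → F) × (Fin (n + 1) → F)),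
        IsSubsysCode p C K R d' ∧ PureTo C 1 := by
  haveI : Fact p.Prime := ⟨hp⟩
  obtain ⟨C, hC⟩ := h
  simp only [IsSubsysCode] at hC
  obtain ⟨h1, h2, h3, h4⟩ := hC
  set q := Fintype.card F with hq
  have hq1 : 0 < q := Fintype.card_pos
  have hqn : 0 < q ^ n := pow_pos hq1 n
  set Ds : Set (Lsc.V F n) := ↑C ∩ sympDual p ↑C with hDs
  set E : Set (Lsc.V F n) := sympDual p Ds with hE
  have h0Ds : (0 : Lsc.V F n) ∈ Ds := ⟨C.zero_mem, fun w _ => Lsc.trSympForm_zero_left w⟩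
  have hRpos : 0 < R := by
    rcases Nat.eq_zero_or_pos R with h0 | h
    · rw [h0, mul_zero, mul_zero] at h1; omega
    · exact h
  -- rule out E = ↑C
  have hEC : E ≠ ↑C := by
    intro heq
    have hDsGrp : ((C ⊓ Lsc.sympDualGrp p ↑C : AddSubgroup (Lsc.V F n)) : Set (Lsc.V F n)) = Ds := by
      rw [AddSubgroup.coe_inf]; rfl
    have hb := Lsc.card_dual_bound (p := p) (C ⊓ Lsc.sympDualGrp p (↑C : Set (Lsc.V F n)))
    rw [hDsGrp] at hb
    have hcd : Nat.card (C ⊓ Lsc.sympDualGrp p (↑C : Set (Lsc.V F n)) : AddSubgroup (Lsc.V F n))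
        = Nat.card Ds := Nat.card_congr (Equiv.setCongr hDsGrp)
    rw [hcd, ← hE, heq] at hb
    have hcc : Nat.card (↑C : Set (Lsc.V F n)) = Nat.card C := rfl
    rw [hcc] at hb
    -- arithmetic contradiction
    have e3 : (Nat.card C * K) * (Nat.card Ds * (K * R)) = (q ^ n * R) * q ^ n := by
      rw [h2, h1]
    have e4 : (Nat.card C * Nat.card Ds) * (K * (K * R)) = (q ^ n * q ^ n) * R := by
      calc (Nat.card C * Nat.card Ds) * (K * (K * R))
          = (Nat.card C * K) * (Nat.card Ds * (K * R)) := by ring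
        _ = (q ^ n * R) * q ^ n := e3
        _ = (q ^ n * q ^ n) * R := by ring
    have hb' : (q ^ n * q ^ n) * (K * (K * R)) ≤ (q ^ n * q ^ n) * R := by
      calc (q ^ n * q ^ n) * (K * (K * R))
          ≤ (Nat.card C * Nat.card Ds) * (K * (K * R)) := Nat.mul_le_mul_right _ hb
        _ = (q ^ n * q ^ n) * R := e4
    have hKKR : K * (K * R) ≤ R := Nat.le_of_mul_le_mul_left hb' (Nat.mul_pos hqn hqn)
    have : 2 * (2 * R) ≤ K * (K * R) :=
      Nat.mul_le_mul hK (Nat.mul_le_mul_right R hK)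
    omega
  -- the lifted code
  set C' := Lsc.liftGrp C with hC'
  have hC'coe : (↑C' : Set (Lsc.V F (n + 1))) = Lsc.liftSet ↑C := rfl
  have hdualC' : sympDual p (↑C' : Set (Lsc.V F (n + 1))) = Lsc.liftSet (sympDual p ↑C) := by
    rw [hC'coe]; exact Lsc.sympDual_liftSet C.zero_mem
  have hDs' : ((↑C' ∩ sympDual p ↑C' : Set (Lsc.V F (n + 1)))) = Lsc.liftSet Ds := by
    rw [hC'coe, Lsc.sympDual_liftSet C.zero_mem, Lsc.liftSet_inter]
  have hE' : sympDual p ((↑C' ∩ sympDual p ↑C' : Set (Lsc.V F (n + 1)))) = Lsc.liftSet E := by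
    rw [hDs']; exact Lsc.sympDual_liftSet h0Ds
  have hne' : sympDual p ((↑C' ∩ sympDual p ↑C' : Set (Lsc.V F (n + 1)))) ≠ ↑C' := by
    rw [hE', hC'coe]
    intro hcon
    exact hEC (Lsc.liftSet_inj hcon)
  refine ⟨minSwt (sympDual p ((↑C' ∩ sympDual p ↑C' : Set (Lsc.V F (n + 1)))) \ ↑C'), ?_, C', ?_, ?_⟩
  · -- d ≤ d'
    have hd : d = minSwt (E \ ↑C) := h4 hEC
    have hsub : (↑C : Set (Lsc.V F n)) ⊆ E := Lsc.subset_sympDual_of C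
    have hex : ∃ s, s ∈ E ∧ s ∉ (↑C : Set (Lsc.V F n)) := by
      by_contra hcon
      push_neg at hcon
      exact hEC (Set.Subset.antisymm hcon hsub)
    obtain ⟨s, hsE, hsC⟩ := hex
    rw [hE', hC'coe]
    have hw0mem : Lsc.emb s 0 ∈ (Lsc.liftSet E \ Lsc.liftSet ↑C) \ {0} := by
      refine ⟨⟨Lsc.emb_mem hsE 0, fun hc => hsC (by simpa using hc.1)⟩, ?_⟩
      simp only [Set.mem_singleton_iff]
      intro hc
      apply hsC
      have : Lsc.resv (Lsc.emb s 0) = 0 := by rw [hc]; rfl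
      rw [Lsc.resv_emb] at this
      rw [this]
      exact C.zero_mem
    have hT : (swt '' ((Lsc.liftSet E \ Lsc.liftSet ↑C) \ {0})).Nonempty :=
      ⟨swt (Lsc.emb s 0), Lsc.emb s 0, hw0mem, rfl⟩
    obtain ⟨w, ⟨⟨hwE, hwC⟩, _⟩, hsw⟩ := Nat.sInf_mem hT
    have hrwE : Lsc.resv w ∈ E := hwE.1
    have hrwC : Lsc.resv w ∉ (↑C : Set (Lsc.V F n)) := fun hc => hwC ⟨hc, hwE.2⟩
    have hrw0 : Lsc.resv w ≠ 0 := fun hc => hrwC (hc ▸ C.zero_mem)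
    have hdle : d ≤ swt (Lsc.resv w) := by
      rw [hd]
      exact Nat.sInf_le ⟨Lsc.resv w, ⟨⟨hrwE, hrwC⟩, hrw0⟩, rfl⟩
    calc d ≤ swt (Lsc.resv w) := hdle
      _ ≤ swt w := Lsc.swt_resv_le w
      _ = minSwt (Lsc.liftSet E \ Lsc.liftSet ↑C) := hsw
  · -- IsSubsysCode
    simp only [IsSubsysCode]
    refine ⟨?_, ?_, ?_, ?_⟩
    · rw [hDs', Lsc.card_liftSet]
      calc Nat.card Ds * q * (K * R) = Nat.card Ds * (K * R) * q := by ring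
        _ = q ^ n * q := by rw [h1]
        _ = q ^ (n + 1) := (pow_succ q n).symm
    · rw [hC', Lsc.card_liftGrp]
      calc Nat.card C * q * K = Nat.card C * K * q := by ring
        _ = q ^ n * R * q := by rw [h2]
        _ = q ^ (n + 1) * R := by rw [pow_succ]; ring
    · intro hcon
      exact absurd hcon hne'
    · intro _
      first | rfl | trivial
  · intro v _ hv0
    exact Lsc.one_le_swt hv0
end

section
/- Shortening subsystem codes: If there exists a pure ((n,K,R,d))_q Clifford subsystem code with n ≥ 2 and d ≥ 2, then there exists a pure ((n−1, qK, R, d−1))_q Clifford subsystem code. -/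
open Finset

open Module
set_option maxHeartbeats 1000000
set_option linter.unusedSectionVars false

section
variable (p : ℕ) [Fact p.Prime] (F : Type) [Field F] [Fintype F] [CharP F p]
  [alg : Algebra (ZMod p) F]

noncomputable def sB (n : ℕ) :
    LinearMap.BilinForm (ZMod p) ((Fin n → F) × (Fin n → F)) :=
  LinearMap.mk₂ (ZMod p)
    (fun u v => Algebra.trace (ZMod p) F (∑ i, (v.1 i * u.2 i - u.1 i * v.2 i)))
    (fun m m' v => by
      rw [← map_add, ← Finset.sum_add_distrib]
      congr 1; apply Finset.sum_congr rfl; intro i _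
      simp only [Prod.fst_add, Prod.snd_add, Pi.add_apply]; ring)
    (fun c m v => by
      rw [← map_smul, Finset.smul_sum]
      congr 1; apply Finset.sum_congr rfl; intro i _
      simp only [Prod.smul_fst, Prod.smul_snd, Pi.smul_apply, smul_sub,
        Algebra.mul_smul_comm, Algebra.smul_mul_assoc])
    (fun m v v' => by
      rw [← map_add, ← Finset.sum_add_distrib]
      congr 1; apply Finset.sum_congr rfl; intro i _
      simp only [Prod.fst_add, Prod.snd_add, Pi.add_apply]; ring)
    (fun c m v => by
      rw [← map_smul, Finset.smul_sum]
      congr 1; apply Finset.sum_congr rfl; intro i _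
      simp only [Prod.smul_fst, Prod.smul_snd, Pi.smul_apply, smul_sub,
        Algebra.mul_smul_comm, Algebra.smul_mul_assoc])

@[simp] lemma sB_apply (n : ℕ) (u v : (Fin n → F) × (Fin n → F)) :
    sB p F n u v = Algebra.trace (ZMod p) F (∑ i, (v.1 i * u.2 i - u.1 i * v.2 i)) := rfl

lemma trSympForm_eq_sB {n : ℕ} (u v : (Fin n → F) × (Fin n → F)) :
    trSympForm p u v = sB p F n u v := by
  obtain rfl : alg = ZMod.algebra F p := Subsingleton.elim _ _
  rfl

lemma sB_skew (n : ℕ) (u v : (Fin n → F) × (Fin n → F)) :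
    sB p F n u v = - sB p F n v u := by
  rw [sB_apply, sB_apply, ← map_neg, ← Finset.sum_neg_distrib]
  congr 1; apply Finset.sum_congr rfl; intro i _; ring

lemma sB_refl (n : ℕ) : (sB p F n).IsRefl := by
  intro u v h; rw [sB_skew, h, neg_zero]

lemma trace_ne (a : F) (ha : a ≠ 0) : ∃ b : F, Algebra.trace (ZMod p) F (b * a) ≠ 0 := by
  have htr := (traceForm_nondegenerate (ZMod p) F).1 a
  by_contra! hf
  apply ha
  apply htr
  intro c
  rw [Algebra.traceForm_apply]
  rw [mul_comm] at *
  exact hf c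

/-- vector supported at coordinate `i` -/
noncomputable def iota {n : ℕ} (i : Fin n) : (F × F) →ₗ[ZMod p] ((Fin n → F) × (Fin n → F)) where
  toFun z := (Pi.single i z.1, Pi.single i z.2)
  map_add' z w := by
    ext j <;> simp [Pi.single_add]
  map_smul' c z := by
    ext j <;> simp [Pi.single_smul]

lemma sB_iota {n : ℕ} (i : Fin n) (z : F × F) (u : (Fin n → F) × (Fin n → F)) :
    sB p F n (iota p F i z) u = Algebra.trace (ZMod p) F (u.1 i * z.2 - z.1 * u.2 i) := by
  rw [sB_apply]
  congr 1
  rw [Finset.sum_eq_single i]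
  · simp [iota]
  · intro j _ hj
    simp [iota, Pi.single_eq_of_ne hj]
  · simp

lemma sB_nondeg (n : ℕ) : (sB p F n).Nondegenerate := by
  refine (sB_refl p F n).nondegenerate_iff_separatingLeft.mpr ?_
  intro u hu
  have key : ∀ i : Fin n, u.1 i = 0 ∧ u.2 i = 0 := by
    intro i
    constructor
    · by_contra h1
      obtain ⟨b, hb⟩ := trace_ne p F _ h1
      apply hb
      have h2 : sB p F n (iota p F i (0, b)) u = 0 := by
        rw [sB_skew, hu, neg_zero]
      rw [sB_iota] at h2
      simpa [mul_comm] using h2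
    · by_contra h1
      obtain ⟨b, hb⟩ := trace_ne p F _ h1
      apply hb
      have h2 : sB p F n (iota p F i (b, 0)) u = 0 := by
        rw [sB_skew, hu, neg_zero]
      rw [sB_iota] at h2
      simpa [mul_comm] using h2
  ext1
  · ext i; exact (key i).1
  · ext i; exact (key i).2

open LinearMap.BilinForm in
/-- orthogonal complement w.r.t. `sB` -/
noncomputable def orth {n : ℕ} (A : Submodule (ZMod p) ((Fin n → F) × (Fin n → F))) :
    Submodule (ZMod p) ((Fin n → F) × (Fin n → F)) :=
  (sB p F n).orthogonal A

lemma mem_orth {n : ℕ} {A : Submodule (ZMod p) ((Fin n → F) × (Fin n → F))}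
    {v : (Fin n → F) × (Fin n → F)} :
    v ∈ orth p F A ↔ ∀ w ∈ A, sB p F n w v = 0 := Iff.rfl

lemma coe_orth {n : ℕ} (A : Submodule (ZMod p) ((Fin n → F) × (Fin n → F))) :
    (orth p F A : Set _) = sympDual p (A : Set ((Fin n → F) × (Fin n → F))) := by
  ext v
  constructor
  · intro hv w hw
    rw [trSympForm_eq_sB p F]
    exact sB_refl p F n w v (hv w hw)
  · intro hv w hw
    apply sB_refl p F n v w
    rw [← trSympForm_eq_sB p F]
    exact hv w hw

lemma card_submodule {n : ℕ} (A : Submodule (ZMod p) ((Fin n → F) × (Fin n → F))) :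
    Nat.card A = p ^ finrank (ZMod p) A := by
  haveI : Fintype A := Fintype.ofFinite A
  rw [Nat.card_eq_fintype_card, card_eq_pow_finrank (K := ZMod p), ZMod.card]

lemma finrank_V (n : ℕ) :
    finrank (ZMod p) ((Fin n → F) × (Fin n → F)) = 2 * (n * finrank (ZMod p) F) := by
  rw [finrank_prod, finrank_pi_fintype]
  simp [Finset.sum_const, two_mul]

lemma card_V (n : ℕ) :
    Nat.card ((Fin n → F) × (Fin n → F)) = Fintype.card F ^ n * Fintype.card F ^ n := by
  simp [Nat.card_eq_fintype_card, Fintype.card_prod, Fintype.card_fun]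

lemma finrank_orth {n : ℕ} (A : Submodule (ZMod p) ((Fin n → F) × (Fin n → F))) :
    finrank (ZMod p) (orth p F A) =
      finrank (ZMod p) ((Fin n → F) × (Fin n → F)) - finrank (ZMod p) A :=
  LinearMap.BilinForm.finrank_orthogonal (sB_nondeg p F n) A

lemma orth_orth {n : ℕ} (A : Submodule (ZMod p) ((Fin n → F) × (Fin n → F))) :
    orth p F (orth p F A) = A :=
  LinearMap.BilinForm.orthogonal_orthogonal (sB_nondeg p F n) (sB_refl p F n) A

lemma orth_sup {n : ℕ} (X Y : Submodule (ZMod p) ((Fin n → F) × (Fin n → F))) :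
    orth p F (X ⊔ Y) = orth p F X ⊓ orth p F Y := by
  apply le_antisymm
  · exact le_inf (LinearMap.BilinForm.orthogonal_le le_sup_left)
      (LinearMap.BilinForm.orthogonal_le le_sup_right)
  · rintro v ⟨hx, hy⟩ w hw
    rw [Submodule.mem_sup] at hw
    obtain ⟨x, hxm, y, hym, rfl⟩ := hw
    show sB p F n (x + y) v = 0
    rw [map_add, LinearMap.add_apply, hx x hxm, hy y hym, add_zero]

lemma card_mul_card_orth {n : ℕ} (A : Submodule (ZMod p) ((Fin n → F) × (Fin n → F))) :
    Nat.card A * Nat.card (orth p F A) = Fintype.card F ^ n * Fintype.card F ^ n := by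
  rw [card_submodule, card_submodule, finrank_orth, ← pow_add,
    Nat.add_sub_cancel' (Submodule.finrank_le A)]
  have hc := card_eq_pow_finrank (K := ZMod p) (V := (Fin n → F) × (Fin n → F))
  rw [ZMod.card] at hc
  rw [← hc, Fintype.card_prod, Fintype.card_fun, Fintype.card_fin]

variable {m : ℕ} (i : Fin (m + 1))

/-- evaluation at coordinate `i` -/
noncomputable def projL : ((Fin (m+1) → F) × (Fin (m+1) → F)) →ₗ[ZMod p] (F × F) where
  toFun v := (v.1 i, v.2 i)
  map_add' _ _ := rfl
  map_smul' _ _ := rfl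

/-- deletion of coordinate `i` -/
noncomputable def delL : ((Fin (m+1) → F) × (Fin (m+1) → F)) →ₗ[ZMod p]
    ((Fin m → F) × (Fin m → F)) where
  toFun v := (fun j => v.1 (i.succAbove j), fun j => v.2 (i.succAbove j))
  map_add' _ _ := rfl
  map_smul' _ _ := rfl

lemma proj_iota (z : F × F) : projL p F i (iota p F i z) = z := by
  simp [projL, iota]

lemma iota_injective : Function.Injective (iota p F i) := by
  intro z w h
  have := congrArg (projL p F i) h
  rwa [proj_iota, proj_iota] at this

lemma ker_del : LinearMap.ker (delL p F i) = LinearMap.range (iota p F i) := by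
  ext v
  simp only [LinearMap.mem_ker, LinearMap.mem_range]
  constructor
  · intro hv
    refine ⟨(v.1 i, v.2 i), ?_⟩
    have h1 : ∀ x : Fin (m+1), x ≠ i → v.1 x = 0 ∧ v.2 x = 0 := by
      intro x hx
      obtain ⟨j, rfl⟩ := Fin.exists_succAbove_eq hx
      exact ⟨congrFun (congrArg Prod.fst hv) j, congrFun (congrArg Prod.snd hv) j⟩
    ext1
    · ext x
      rcases eq_or_ne x i with rfl | hx
      · simp [iota, Pi.single_eq_same]
      · simp [iota, Pi.single_eq_of_ne hx, (h1 x hx).1]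
    · ext x
      rcases eq_or_ne x i with rfl | hx
      · simp [iota, Pi.single_eq_same]
      · simp [iota, Pi.single_eq_of_ne hx, (h1 x hx).2]
  · rintro ⟨z, rfl⟩
    ext1
    · ext j; simp [delL, iota, Pi.single_eq_of_ne (i.succAbove_ne j)]
    · ext j; simp [delL, iota, Pi.single_eq_of_ne (i.succAbove_ne j)]

lemma ker_proj_inf_E :
    LinearMap.ker (projL p F i) ⊓ LinearMap.range (iota p F i) = ⊥ := by
  rw [eq_bot_iff]
  rintro v ⟨hk, z, rfl⟩
  have hz : z = 0 := by
    have := proj_iota p F i z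
    rw [LinearMap.mem_ker.mp hk] at this
    exact this.symm
  rw [hz, map_zero]
  exact Submodule.zero_mem ⊥

lemma sB_iota' {n : ℕ} (j : Fin n) (z : F × F) (u : (Fin n → F) × (Fin n → F)) :
    sB p F n u (iota p F j z) = Algebra.trace (ZMod p) F (z.1 * u.2 j - u.1 j * z.2) := by
  rw [sB_apply]
  congr 1
  rw [Finset.sum_eq_single j]
  · simp [iota]
  · intro x _ hx
    simp [iota, Pi.single_eq_of_ne hx]
  · simp

lemma proj_surj : LinearMap.range (projL p F i) = ⊤ := by
  rw [eq_top_iff]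
  rintro z -
  exact ⟨iota p F i z, proj_iota p F i z⟩

lemma finrank_E :
    finrank (ZMod p) (LinearMap.range (iota p F i)) = 2 * finrank (ZMod p) F := by
  rw [LinearMap.finrank_range_of_inj (iota_injective p F i), finrank_prod, two_mul]

lemma finrank_ker_proj :
    finrank (ZMod p) (LinearMap.ker (projL p F i)) + 2 * finrank (ZMod p) F =
      finrank (ZMod p) ((Fin (m+1) → F) × (Fin (m+1) → F)) := by
  have := LinearMap.finrank_range_add_finrank_ker (projL p F i)
  rw [proj_surj, finrank_top, finrank_prod] at this
  omega

lemma orth_ker_proj :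
    orth p F (LinearMap.ker (projL p F i)) = LinearMap.range (iota p F i) := by
  have hle : LinearMap.range (iota p F i) ≤ orth p F (LinearMap.ker (projL p F i)) := by
    rintro _ ⟨z, rfl⟩ u hu
    rw [LinearMap.mem_ker] at hu
    have h1 : u.1 i = 0 := congrArg Prod.fst hu
    have h2 : u.2 i = 0 := congrArg Prod.snd hu
    show sB p F (m+1) u (iota p F i z) = 0
    rw [sB_iota', h1, h2]
    simp
  refine (Submodule.eq_of_le_of_finrank_le hle ?_).symm
  rw [finrank_E, finrank_orth]
  have := finrank_ker_proj p F i
  omega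

lemma ker_proj_eq_orth_E :
    LinearMap.ker (projL p F i) = orth p F (LinearMap.range (iota p F i)) := by
  rw [← orth_ker_proj, orth_orth]

variable (A : Submodule (ZMod p) ((Fin (m+1) → F) × (Fin (m+1) → F)))

lemma inf_ker_eq_orth_sup :
    A ⊓ LinearMap.ker (projL p F i) =
      orth p F (orth p F A ⊔ LinearMap.range (iota p F i)) := by
  rw [orth_sup, orth_orth, ker_proj_eq_orth_E]

lemma finrank_inf_ker
    (hdisj : orth p F A ⊓ LinearMap.range (iota p F i) = ⊥) :
    finrank (ZMod p) (A ⊓ LinearMap.ker (projL p F i) :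
        Submodule (ZMod p) ((Fin (m+1) → F) × (Fin (m+1) → F)))
      + 2 * finrank (ZMod p) F = finrank (ZMod p) A := by
  rw [inf_ker_eq_orth_sup]
  have h1 := Submodule.finrank_sup_add_finrank_inf_eq (orth p F A)
    (LinearMap.range (iota p F i))
  rw [hdisj, finrank_bot, add_zero, finrank_E, finrank_orth] at h1
  rw [finrank_orth]
  have h2 := Submodule.finrank_le A
  have h3 := Submodule.finrank_le (orth p F A ⊔ LinearMap.range (iota p F i))
  have h4 := Submodule.finrank_le (orth p F A)
  omega

lemma finrank_map_del
    (B' : Submodule (ZMod p) ((Fin (m+1) → F) × (Fin (m+1) → F)))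
    (hB : B' ⊓ LinearMap.range (iota p F i) = ⊥) :
    finrank (ZMod p) (B'.map (delL p F i)) = finrank (ZMod p) B' := by
  have hk : LinearMap.ker ((delL p F i).comp B'.subtype) = ⊥ := by
    rw [eq_bot_iff]
    rintro ⟨x, hx⟩ hker
    rw [LinearMap.mem_ker, LinearMap.comp_apply] at hker
    have hxE : x ∈ LinearMap.range (iota p F i) := by
      rw [← ker_del]; exact hker
    have : x = 0 := by
      have := hB ▸ (Submodule.mem_inf.mpr ⟨hx, hxE⟩)
      simpa using this
    simpa using this
  have := LinearMap.finrank_range_add_finrank_ker ((delL p F i).comp B'.subtype)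
  rw [hk, finrank_bot, add_zero, LinearMap.range_comp, Submodule.range_subtype] at this
  exact this

lemma sB_del (u w : (Fin (m+1) → F) × (Fin (m+1) → F)) (h1 : u.1 i = 0) (h2 : u.2 i = 0) :
    sB p F m (delL p F i u) (delL p F i w) = sB p F (m+1) u w := by
  rw [sB_apply, sB_apply]
  congr 1
  rw [Fin.sum_univ_succAbove (fun x => (w.1 x * u.2 x - u.1 x * w.2 x)) i, h1, h2]
  simp [delL]

lemma orth_shorten
    (hdisj : orth p F A ⊓ LinearMap.range (iota p F i) = ⊥)
    (hdisj2 : A ⊓ LinearMap.range (iota p F i) = ⊥) :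
    orth p F ((A ⊓ LinearMap.ker (projL p F i)).map (delL p F i)) =
      (orth p F A).map (delL p F i) := by
  have hle : (orth p F A).map (delL p F i) ≤
      orth p F ((A ⊓ LinearMap.ker (projL p F i)).map (delL p F i)) := by
    rintro _ ⟨w, hw, rfl⟩ _ ⟨u, ⟨huA, huk⟩, rfl⟩
    have huk' : projL p F i u = 0 := huk
    have h1 : u.1 i = 0 := congrArg Prod.fst huk'
    have h2 : u.2 i = 0 := congrArg Prod.snd huk'
    show sB p F m (delL p F i u) (delL p F i w) = 0
    rw [sB_del p F i u w h1 h2]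
    exact hw u huA
  refine (Submodule.eq_of_le_of_finrank_le hle ?_).symm
  rw [finrank_map_del p F i _ hdisj, finrank_orth,
    finrank_map_del p F i _ (by
      rw [eq_bot_iff]
      rintro x ⟨hx1, hx2⟩
      have hxk : x ∈ A ⊓ LinearMap.range (iota p F i) :=
        Submodule.mem_inf.mpr ⟨hx1.1, hx2⟩
      rw [hdisj2] at hxk
      exact hxk),
    finrank_orth]
  have h1 := finrank_inf_ker p F i A hdisj
  have h2 := Submodule.finrank_le A
  have h45 : finrank (ZMod p) ((Fin (m+1) → F) × (Fin (m+1) → F)) =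
      finrank (ZMod p) ((Fin m → F) × (Fin m → F)) + 2 * finrank (ZMod p) F := by
    rw [finrank_V, finrank_V]; ring
  omega

end

section W
variable (p : ℕ) [Fact p.Prime] (F : Type) [Field F] [Fintype F] [CharP F p]
  [alg : Algebra (ZMod p) F] {m : ℕ} (i : Fin (m + 1))

/-- support of a vector -/
def suppV {F : Type} [Field F] {n : ℕ} (v : (Fin n → F) × (Fin n → F)) : Set (Fin n) :=
  {x | ¬(v.1 x = 0 ∧ v.2 x = 0)}

lemma swt_eq {n : ℕ} (v : (Fin n → F) × (Fin n → F)) : swt v = (suppV v).ncard := rfl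

lemma swt_del (v : (Fin (m+1) → F) × (Fin (m+1) → F)) :
    swt (delL p F i v) = (suppV v \ {i}).ncard := by
  have h1 : suppV (delL p F i v) = i.succAbove ⁻¹' (suppV v) := rfl
  rw [swt_eq, h1, ← Set.ncard_image_of_injective _ (Fin.succAbove_right_injective (p := i)),
    Set.image_preimage_eq_inter_range, Fin.range_succAbove, ← Set.diff_eq]

lemma swt_del_of_zero (v : (Fin (m+1) → F) × (Fin (m+1) → F))
    (h1 : v.1 i = 0) (h2 : v.2 i = 0) : swt (delL p F i v) = swt v := by
  rw [swt_del, Set.diff_singleton_eq_self (by simp [suppV, h1, h2]), ← swt_eq]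

lemma swt_del_of_mem (v : (Fin (m+1) → F) × (Fin (m+1) → F)) (hi : i ∈ suppV v) :
    swt (delL p F i v) + 1 = swt v := by
  rw [swt_del, Set.ncard_diff_singleton_add_one hi (Set.toFinite _), ← swt_eq]

lemma swt_del_ge (v : (Fin (m+1) → F) × (Fin (m+1) → F)) :
    swt v ≤ swt (delL p F i v) + 1 := by
  by_cases hi : i ∈ suppV v
  · rw [swt_del_of_mem p F i v hi]
  · rw [swt_del, Set.diff_singleton_eq_self hi, ← swt_eq]
    omega

lemma swt_le_one_of_E (v : (Fin (m+1) → F) × (Fin (m+1) → F))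
    (hv : v ∈ LinearMap.range (iota p F i)) : swt v ≤ 1 := by
  obtain ⟨z, rfl⟩ := hv
  have hsub : suppV ((iota p F i) z) ⊆ {i} := by
    intro x hx
    by_contra hxi
    simp only [Set.mem_singleton_iff] at hxi
    exact hx ⟨Pi.single_eq_of_ne hxi _, Pi.single_eq_of_ne hxi _⟩
  calc swt ((iota p F i) z) = (suppV _).ncard := rfl
    _ ≤ ({i} : Set (Fin (m+1))).ncard := Set.ncard_le_ncard hsub (Set.toFinite _)
    _ = 1 := Set.ncard_singleton i

lemma disj_of_wt2 (Y : Submodule (ZMod p) ((Fin (m+1) → F) × (Fin (m+1) → F)))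
    (hY : ∀ v ∈ Y, v ≠ 0 → 2 ≤ swt v) :
    Y ⊓ LinearMap.range (iota p F i) = ⊥ := by
  rw [eq_bot_iff]
  rintro v ⟨hv1, hv2⟩
  by_contra hvne
  have hne : v ≠ 0 := by simpa using fun h => hvne (by simp [h])
  have := hY v hv1 hne
  have := swt_le_one_of_E p F i v hv2
  omega

lemma card_map_del (A : Submodule (ZMod p) ((Fin (m+1) → F) × (Fin (m+1) → F)))
    (hdisj : orth p F A ⊓ LinearMap.range (iota p F i) = ⊥) :
    Nat.card ((A ⊓ LinearMap.ker (projL p F i)).map (delL p F i)) * Fintype.card F ^ 2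
      = Nat.card A := by
  have hd2 : (A ⊓ LinearMap.ker (projL p F i)) ⊓ LinearMap.range (iota p F i) = ⊥ := by
    rw [eq_bot_iff]
    rintro x ⟨⟨hx1, hx2⟩, hx3⟩
    rw [← ker_proj_inf_E p F i]
    exact ⟨hx2, hx3⟩
  rw [card_submodule, card_submodule, finrank_map_del p F i _ hd2]
  have hF : Fintype.card F = p ^ finrank (ZMod p) F := by
    rw [card_eq_pow_finrank (K := ZMod p), ZMod.card]
  rw [hF, ← pow_mul, ← pow_add, ← finrank_inf_ker p F i A hdisj]
  ring_nf

end W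


set_option maxHeartbeats 2000000 in
/-- Shortening subsystem codes.  If there exists a pure
`((n,K,R,d))_q` Clifford subsystem code with `n ≥ 2` and `d ≥ 2`, then there
exists a pure `((n−1, qK, R, d−1))_q` Clifford subsystem code. -/
theorem shortening_subsystem_codes
    (p : ℕ) (hp : p.Prime) (F : Type) [Field F] [Fintype F] [CharP F p]
    (n K R d : ℕ) (hn : 2 ≤ n) (hd : 2 ≤ d)
    (h : ∃ C : AddSubgroup ((Fin n → F) × (Fin n → F)),
      IsSubsysCode p C K R d ∧ PureTo C d) :
    ∃ C : AddSubgroup ((Fin (n - 1) → F) × (Fin (n - 1) → F)),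
      IsSubsysCode p C (Fintype.card F * K) R (d - 1) ∧ PureTo C (d - 1) := by
  classical
  haveI : Fact p.Prime := ⟨hp⟩
  letI alg : Algebra (ZMod p) F := ZMod.algebra F p
  obtain ⟨C, hC, hpure⟩ := h
  obtain ⟨m, rfl⟩ : ∃ m, n = m + 1 := ⟨n - 1, by omega⟩
  obtain ⟨h1, h2, h3, h4⟩ := hC
  have hq1 : 0 < Fintype.card F := Fintype.card_pos
  set q := Fintype.card F with hq
  set Dset : Set ((Fin (m+1) → F) × (Fin (m+1) → F)) := ↑C ∩ sympDual p ↑C with hDsetdef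
  -- submodule versions
  set Csub : Submodule (ZMod p) ((Fin (m+1) → F) × (Fin (m+1) → F)) :=
    AddSubgroup.toZModSubmodule p C with hCsubdef
  have hCco : (Csub : Set ((Fin (m+1) → F) × (Fin (m+1) → F))) = (C : Set ((Fin (m+1) → F) × (Fin (m+1) → F))) := rfl
  set Dsub := Csub ⊓ orth p F Csub with hDsubdef
  have hDco : (Dsub : Set ((Fin (m+1) → F) × (Fin (m+1) → F))) = Dset := by
    rw [hDsubdef, Submodule.coe_inf, hCco, coe_orth, hCco]
  set X := orth p F Dsub with hXdef
  have hXco : (X : Set ((Fin (m+1) → F) × (Fin (m+1) → F))) = sympDual p Dset := by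
    rw [hXdef, coe_orth, hDco]
  -- weight lower bounds
  have hmemC : ∀ {v}, v ∈ Csub → v ∈ (C : Set ((Fin (m+1) → F) × (Fin (m+1) → F))) :=
    fun {v} hv => by rw [← hCco]; exact hv
  have hClower : ∀ v ∈ (C : Set ((Fin (m+1) → F) × (Fin (m+1) → F))), v ≠ 0 → d ≤ swt v :=
    fun v hv hv0 => hpure v hv hv0
  have hXlower : ∀ v ∈ (X : Set ((Fin (m+1) → F) × (Fin (m+1) → F))), v ≠ 0 → d ≤ swt v := by
    intro v hv hv0
    by_cases hvC : v ∈ (C : Set ((Fin (m+1) → F) × (Fin (m+1) → F)))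
    · exact hClower v hvC hv0
    · have hne : sympDual p Dset ≠ (C : Set ((Fin (m+1) → F) × (Fin (m+1) → F))) := by
        intro he
        rw [hXco, he] at hv
        exact hvC hv
      have hd4 := h4 hne
      rw [minSwt] at hd4
      have hmem : swt v ∈ swt '' ((sympDual p Dset \ ↑C) \ {0}) :=
        ⟨v, ⟨⟨hXco ▸ hv, hvC⟩, hv0⟩, rfl⟩
      have := Nat.sInf_le hmem
      omega
  -- minimum weight witness
  have hwit : ∃ w, w ∈ (X : Set ((Fin (m+1) → F) × (Fin (m+1) → F))) ∧ w ≠ 0 ∧ swt w = d := by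
    by_cases hc : sympDual p Dset = (C : Set ((Fin (m+1) → F) × (Fin (m+1) → F)))
    · have hd3 := h3 hc
      rw [minSwt] at hd3
      have hne : (swt '' (sympDual p Dset \ {0})).Nonempty := by
        by_contra hemp
        rw [Set.not_nonempty_iff_eq_empty] at hemp
        rw [hemp, Nat.sInf_empty] at hd3
        omega
      have hmem := Nat.sInf_mem hne
      rw [← hd3] at hmem
      obtain ⟨w, ⟨hw1, hw2⟩, hw3⟩ := hmem
      refine ⟨w, ?_, by simpa using hw2, hw3⟩
      rw [hXco]; exact hw1
    · have hd4 := h4 hc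
      rw [minSwt] at hd4
      have hne : (swt '' ((sympDual p Dset \ ↑C) \ {0})).Nonempty := by
        by_contra hemp
        rw [Set.not_nonempty_iff_eq_empty] at hemp
        rw [hemp, Nat.sInf_empty] at hd4
        omega
      have hmem := Nat.sInf_mem hne
      rw [← hd4] at hmem
      obtain ⟨w, ⟨⟨hw1, _⟩, hw2⟩, hw3⟩ := hmem
      refine ⟨w, ?_, by simpa using hw2, hw3⟩
      rw [hXco]; exact hw1
  obtain ⟨w, hwX, hw0, hwd⟩ := hwit
  have hsupp : (suppV w).Nonempty := by
    apply Set.nonempty_of_ncard_ne_zero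
    rw [← swt_eq, hwd]
    omega
  obtain ⟨i, hi⟩ := hsupp
  -- disjointness facts
  have hdisjD : X ⊓ LinearMap.range (iota p F i) = ⊥ :=
    disj_of_wt2 p F i X (fun v hv h0 => by have := hXlower v hv h0; omega)
  have hCleX : orth p F Csub ≤ X :=
    LinearMap.BilinForm.orthogonal_le inf_le_left
  have hdisjC : orth p F Csub ⊓ LinearMap.range (iota p F i) = ⊥ := by
    rw [eq_bot_iff, ← hdisjD]
    exact inf_le_inf_right _ hCleX
  have hCsubdisj : Csub ⊓ LinearMap.range (iota p F i) = ⊥ :=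
    disj_of_wt2 p F i Csub (fun v hv h0 => by
      have := hClower v (hmemC hv) h0; omega)
  have hDsubdisj : Dsub ⊓ LinearMap.range (iota p F i) = ⊥ := by
    rw [eq_bot_iff, ← hCsubdisj]
    exact inf_le_inf_right _ inf_le_left
  have hCleOD : Csub ≤ X := by
    intro u hu
    exact fun dd hdd => sB_refl p F (m+1) u dd ((Submodule.mem_inf.mp hdd).2 u hu)
  -- shortened codes
  set C0 := Csub ⊓ LinearMap.ker (projL p F i) with hC0def
  set D0 := Dsub ⊓ LinearMap.ker (projL p F i) with hD0def
  set C' := C0.map (delL p F i) with hC'def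
  set D' := D0.map (delL p F i) with hD'def
  have hOrthC' : orth p F C' = (orth p F Csub).map (delL p F i) :=
    orth_shorten p F i Csub hdisjC hCsubdisj
  have hOrthD' : orth p F D' = X.map (delL p F i) := by
    rw [hD'def, hD0def]
    rw [hXdef]
    exact orth_shorten p F i Dsub hdisjD hDsubdisj
  have hD'eq : C' ⊓ orth p F C' = D' := by
    rw [hOrthC']
    apply le_antisymm
    · rintro x ⟨hx1, hx2⟩
      obtain ⟨u, hu, hux⟩ := hx1
      obtain ⟨wc, hwc, hwcx⟩ := hx2
      have hmem : u - wc ∈ X ⊓ LinearMap.range (iota p F i) := by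
        refine Submodule.mem_inf.mpr ⟨?_, ?_⟩
        · exact Submodule.sub_mem _ (hCleOD (Submodule.mem_inf.mp hu).1) (hCleX hwc)
        · rw [← ker_del p F i, LinearMap.mem_ker, map_sub, hux, hwcx, sub_self]
      rw [hdisjD, Submodule.mem_bot, sub_eq_zero] at hmem
      refine ⟨u, Submodule.mem_inf.mpr ⟨Submodule.mem_inf.mpr
        ⟨(Submodule.mem_inf.mp hu).1, hmem ▸ hwc⟩, (Submodule.mem_inf.mp hu).2⟩, hux⟩
    · apply le_inf
      · exact Submodule.map_mono (inf_le_inf_right _ inf_le_left)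
      · exact Submodule.map_mono (le_trans inf_le_left inf_le_right)
  -- cardinalities
  have hcardD : Nat.card D' * q ^ 2 = Nat.card Dsub := by
    rw [hD'def, hD0def]
    exact card_map_del p F i Dsub (by rw [← hXdef]; exact hdisjD)
  have hcardC : Nat.card C' * q ^ 2 = Nat.card Csub := by
    rw [hC'def, hC0def]
    exact card_map_del p F i Csub hdisjC
  have hDcard : Nat.card ↥Dset = Nat.card Dsub := by
    rw [← hDco]; rfl
  have hCcard : Nat.card C = Nat.card Csub := rfl
  -- the new code
  refine ⟨C'.toAddSubgroup, ?_, ?_⟩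
  · have hC'co : (C'.toAddSubgroup : Set ((Fin m → F) × (Fin m → F))) = (C' : Set ((Fin m → F) × (Fin m → F))) := rfl
    have hDs'co : ((C'.toAddSubgroup : Set ((Fin m → F) × (Fin m → F))) ∩ sympDual p (C'.toAddSubgroup : Set ((Fin m → F) × (Fin m → F))))
        = (D' : Set _) := by
      rw [hC'co, ← coe_orth, ← Submodule.coe_inf, hD'eq]
    have hsd : sympDual p ((C'.toAddSubgroup : Set ((Fin m → F) × (Fin m → F))) ∩ sympDual p (C'.toAddSubgroup : Set ((Fin m → F) × (Fin m → F))))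
        = ((X.map (delL p F i) : Submodule (ZMod p) _) : Set _) := by
      rw [hDs'co, ← coe_orth, hOrthD']
    -- the distance witness
    have hy₀mem : delL p F i w ∈ X.map (delL p F i) := ⟨w, hwX, rfl⟩
    have hy₀wt : swt (delL p F i w) + 1 = d := by
      rw [swt_del_of_mem p F i w hi, hwd]
    have hswt0 : swt (0 : (Fin m → F) × (Fin m → F)) = 0 := by
      simp [swt]
    have hy₀ne : delL p F i w ≠ 0 := by
      intro h0
      rw [h0, hswt0] at hy₀wt
      omega
    have hy₀notC' : delL p F i w ∉ (C' : Set ((Fin m → F) × (Fin m → F))) := by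
      rintro ⟨u, hu, huy⟩
      have hu0 : u ≠ 0 := by
        rintro rfl
        rw [map_zero] at huy
        exact hy₀ne huy.symm
      have hud : d ≤ swt u :=
        hClower u (hmemC (Submodule.mem_inf.mp hu).1) hu0
      have huk : projL p F i u = 0 := (Submodule.mem_inf.mp hu).2
      have hwt : swt (delL p F i u) = swt u :=
        swt_del_of_zero p F i u (congrArg Prod.fst huk) (congrArg Prod.snd huk)
      rw [← huy, hwt] at hy₀wt
      omega
    refine ⟨?_, ?_, ?_, ?_⟩
    · -- cardinality equation 1
      have hDs'card : Nat.card ↥((C'.toAddSubgroup : Set ((Fin m → F) × (Fin m → F))) ∩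
          sympDual p (C'.toAddSubgroup : Set ((Fin m → F) × (Fin m → F)))) = Nat.card D' := by
        rw [hDs'co]; rfl
      rw [hDs'card]
      simp only [Nat.add_sub_cancel, ← hq]
      apply Nat.eq_of_mul_eq_mul_right hq1
      have expand : Nat.card D' * (q * K * R) * q = Nat.card D' * q ^ 2 * (K * R) := by ring
      rw [expand, hcardD, ← hDcard, h1, ← pow_succ]
    · -- cardinality equation 2
      show Nat.card C' * (q * K) = q ^ m * R
      apply Nat.eq_of_mul_eq_mul_right hq1
      have expand : Nat.card C' * (q * K) * q = Nat.card C' * q ^ 2 * K := by ring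
      rw [expand, hcardC, ← hCcard, h2, pow_succ]
      ring
    · -- degenerate case cannot occur
      intro heq
      exfalso
      apply hy₀notC'
      have : delL p F i w ∈ sympDual p ((C'.toAddSubgroup : Set ((Fin m → F) × (Fin m → F))) ∩
          sympDual p (C'.toAddSubgroup : Set ((Fin m → F) × (Fin m → F)))) := by
        rw [hsd]; exact hy₀mem
      rw [heq] at this
      exact this
    · -- the distance
      intro _
      rw [hsd, minSwt]
      apply le_antisymm
      · apply le_csInf
        · exact ⟨swt (delL p F i w), ⟨delL p F i w, ⟨⟨hy₀mem, hy₀notC'⟩, hy₀ne⟩, rfl⟩⟩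
        · rintro t ⟨y, ⟨⟨hyX, _⟩, hy0⟩, rfl⟩
          obtain ⟨w', hw', rfl⟩ := hyX
          have hw'0 : w' ≠ 0 := by
            rintro rfl
            rw [map_zero] at hy0
            exact hy0 rfl
          have hlow := hXlower w' hw' hw'0
          have hge := swt_del_ge p F i w'
          omega
      · have hmem : swt (delL p F i w) ∈ swt ''
            ((SetLike.coe (X.map (delL p F i)) \ SetLike.coe C'.toAddSubgroup) \ {0}) :=
          ⟨delL p F i w, ⟨⟨hy₀mem, hy₀notC'⟩, hy₀ne⟩, rfl⟩
        have := Nat.sInf_le hmem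
        omega
  · -- purity
    intro v hv hv0
    obtain ⟨u, hu, rfl⟩ := hv
    have hu0 : u ≠ 0 := by
      rintro rfl
      rw [map_zero] at hv0
      exact hv0 rfl
    have hud : d ≤ swt u :=
      hClower u (hmemC (Submodule.mem_inf.mp hu).1) hu0
    have huk : projL p F i u = 0 := (Submodule.mem_inf.mp hu).2
    have hwt : swt (delL p F i u) = swt u :=
      swt_del_of_zero p F i u (congrArg Prod.fst huk) (congrArg Prod.snd huk)
    omega
end

section
/- From Hermitian self-orthogonal codes to symplectic self-orthogonal codes: Let q be a prime power. If there exists an F_{q^2}-linear code X ⊆ F_{q^2}^n such that X ⊆ X^⊥h, then there exists an F_q-linear code C ⊆ F_q^{2n} such that C ⊆ C^⊥s, |C| = |X|, swt(C^⊥s \ C) = wt(X^⊥h \ X), and swt(C) = wt(X); explicitly, for a basis {1, β} of F_{q^2} over F_q, the code C = {(u|v) : u, v ∈ F_q^n, u + βv ∈ X} has these properties. -/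
open Finset

/-- Trace-form nondegeneracy for a finite field over its prime field. -/
lemma aux_trace_nondeg (p : ℕ) (hp : p.Prime) (F : Type) [Field F] [Fintype F]
    [Algebra (ZMod p) F] (s : F) (h : ∀ a : F, Algebra.trace (ZMod p) F (a * s) = 0) :
    s = 0 := by
  haveI := Fact.mk hp
  by_contra hs
  haveI : Algebra.IsAlgebraic (ZMod p) F := Algebra.IsAlgebraic.of_finite _ _
  have hne := Algebra.trace_ne_zero (ZMod p) F
  obtain ⟨t, ht⟩ : ∃ t : F, Algebra.trace (ZMod p) F t ≠ 0 := by
    by_contra hc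
    push_neg at hc
    exact hne (LinearMap.ext hc)
  have h2 := h (t * s⁻¹)
  rw [mul_assoc, inv_mul_cancel₀ hs, mul_one] at h2
  exact ht h2

/-- If `β` is not in the image of `F`, then `β ^ |F| ≠ β`. -/
lemma aux_frob_ne (F : Type) [Field F] [Fintype F] (K : Type) [Field K] [Algebra F K] (β : K)
    (hβ : ∀ a : F, algebraMap F K a ≠ β) : β ^ Fintype.card F ≠ β := by
  intro h
  classical
  set q := Fintype.card F with hq
  have hq1 : 1 < q := Fintype.one_lt_card
  set P : Polynomial K := Polynomial.X ^ q - Polynomial.X with hP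
  have hPdeg : P.natDegree = q := by
    rw [hP, Polynomial.natDegree_sub_eq_left_of_natDegree_lt, Polynomial.natDegree_X_pow]
    rw [Polynomial.natDegree_X_pow, Polynomial.natDegree_X]
    omega
  have hP0 : P ≠ 0 := by
    intro h0
    rw [h0, Polynomial.natDegree_zero] at hPdeg
    omega
  have hmem : ∀ x : K, x ^ q = x → x ∈ P.roots.toFinset := by
    intro x hx
    rw [Multiset.mem_toFinset, Polynomial.mem_roots hP0]
    simp [Polynomial.IsRoot, hP, sub_eq_zero, hx]
  set S : Finset K := insert β (Finset.univ.image (algebraMap F K)) with hS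
  have hsub : S ⊆ P.roots.toFinset := by
    intro x hx
    rw [hS, Finset.mem_insert] at hx
    rcases hx with rfl | hx
    · exact hmem _ h
    · obtain ⟨a, -, rfl⟩ := Finset.mem_image.mp hx
      exact hmem _ (by rw [← map_pow, FiniteField.pow_card])
  have hScard : S.card = q + 1 := by
    rw [hS, Finset.card_insert_of_notMem, Finset.card_image_of_injective _
      (algebraMap F K).injective, Finset.card_univ]
    intro hmem2
    obtain ⟨a, -, ha⟩ := Finset.mem_image.mp hmem2
    exact hβ a ha
  have hcard := Finset.card_le_card hsub
  have h2 : P.roots.toFinset.card ≤ q := by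
    calc P.roots.toFinset.card ≤ Multiset.card P.roots := Multiset.toFinset_card_le _
      _ ≤ P.natDegree := Polynomial.card_roots' P
      _ = q := hPdeg
  omega

/-- From Hermitian self-orthogonal codes to symplectic
self-orthogonal codes.  If `X ⊆ F_{q^2}^n` is `F_{q^2}`-linear with
`X ⊆ X^⊥h`, then, for a basis `{1, β}` of `F_{q^2}` over `F_q`, the code
`C = {(u|v) : u, v ∈ F_q^n, u + βv ∈ X}` is `F_q`-linear, satisfies
`C ⊆ C^⊥s`, `|C| = |X|`, `swt(C^⊥s \ C) = wt(X^⊥h \ X)`, and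
`swt(C) = wt(X)`. -/
theorem hermitian_to_symplectic_self_orthogonal
    (p : ℕ) (hp : p.Prime) (F : Type) [Field F] [Fintype F] [CharP F p]
    (K : Type) [Field K] [Fintype K] [CharP K p] [Algebra F K]
    (hK : Fintype.card K = Fintype.card F ^ 2)
    (β : K)
    -- `{1, β}` is a basis of `F_{q^2}` over `F_q`
    (hβ : ∀ x : K, ∃! uv : F × F, x = algebraMap F K uv.1 + algebraMap F K uv.2 * β)
    (n : ℕ) (X : Submodule K (Fin n → K))
    (hX : (↑X : Set (Fin n → K)) ⊆ hermDual (Fintype.card F) ↑X) :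
    ∀ C : Set ((Fin n → F) × (Fin n → F)),
      C = {w | (fun i => algebraMap F K (w.1 i) + algebraMap F K (w.2 i) * β) ∈ X} →
      (∀ (a : F), ∀ w ∈ C, a • w ∈ C) ∧
      C ⊆ sympDual p C ∧
      Nat.card C = Nat.card X ∧
      minSwt (sympDual p C \ C) = minHwt (hermDual (Fintype.card F) (↑X : Set (Fin n → K)) \ ↑X) ∧
      minSwt C = minHwt (↑X : Set (Fin n → K)) := by
  intro C hC
  classical
  haveI := Fact.mk hp
  letI := ZMod.algebra F p
  set q := Fintype.card F with hq
  set alg := algebraMap F K with halg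
  set φ : (Fin n → F) × (Fin n → F) → (Fin n → K) :=
    fun w => fun i => alg (w.1 i) + alg (w.2 i) * β with hφ
  have hCpre : C = φ ⁻¹' (↑X : Set (Fin n → K)) := hC
  have hq2 : 1 < q := Fintype.one_lt_card
  obtain ⟨e, -, he⟩ := FiniteField.card F p
  have hβF : ∀ a : F, alg a ≠ β := by
    intro a ha
    obtain ⟨z, hz, hzu⟩ := hβ β
    have e1 := hzu (a, 0) (by simp [ha])
    have e2 := hzu (0, 1) (by simp)
    rw [← e2] at e1
    exact zero_ne_one (congrArg Prod.snd e1)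
  have hβq : β ^ q ≠ β := aux_frob_ne F K β hβF
  have hfixF : ∀ a : F, (alg a) ^ q = alg a := fun a => by
    rw [halg, ← map_pow, FiniteField.pow_card]
  have haddpow : ∀ x y : K, (x + y) ^ q = x ^ q + y ^ q := fun x y => by
    rw [hq, he]; exact add_pow_char_pow ..
  have hsumpow : ∀ (g : Fin n → K), (∑ i, g i) ^ q = ∑ i, g i ^ q := fun g => by
    rw [hq, he]; exact sum_pow_char_pow ..
  have hφ0 : ∀ u v : F, alg u + alg v * β = 0 ↔ u = 0 ∧ v = 0 := by
    intro u v
    constructor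
    · intro h
      obtain ⟨z, hz, hzu⟩ := hβ 0
      have e1 := hzu (u, v) h.symm
      have e2 := hzu (0, 0) (by simp)
      rw [← e2] at e1
      exact ⟨congrArg Prod.fst e1, congrArg Prod.snd e1⟩
    · rintro ⟨rfl, rfl⟩; simp
  have hφinj : Function.Injective φ := by
    intro w w' hww
    have hiq : ∀ i, (w.1 i, w.2 i) = (w'.1 i, w'.2 i) := by
      intro i
      have h1 := congrFun hww i
      obtain ⟨z, hz, hzu⟩ := hβ (alg (w'.1 i) + alg (w'.2 i) * β)
      have e1 := hzu (w.1 i, w.2 i) h1.symm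
      have e2 := hzu (w'.1 i, w'.2 i) rfl
      rw [← e2] at e1
      exact e1
    exact Prod.ext (funext fun i => congrArg Prod.fst (hiq i))
      (funext fun i => congrArg Prod.snd (hiq i))
  have hφsurj : Function.Surjective φ := by
    intro y
    choose f hf using fun i => (hβ (y i)).exists
    exact ⟨(fun i => (f i).1, fun i => (f i).2), funext fun i => (hf i).symm⟩
  have hφzero : φ 0 = 0 := by
    funext i
    simp [hφ]
  -- Hermitian form
  set H : (Fin n → K) → (Fin n → K) → K := fun x y => ∑ i, x i ^ q * y i with hH
  have hcardK : ∀ z : K, z ^ (q * q) = z := by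
    intro z
    rw [← pow_two, ← hK, FiniteField.pow_card]
  have hHsym : ∀ x y, H y x = (H x y) ^ q := by
    intro x y
    rw [hH]
    simp only
    rw [hsumpow]
    apply Finset.sum_congr rfl
    intro i _
    rw [mul_pow, ← pow_mul, hcardK (x i), mul_comm]
  have hHzero : ∀ x y, H x y = 0 ↔ H y x = 0 := by
    have key : ∀ x y : Fin n → K, H x y = 0 → H y x = 0 := by
      intro x y h
      rw [hHsym x y, h, zero_pow (by omega)]
    intro x y
    exact ⟨key x y, key y x⟩
  have hφpow : ∀ w i, (φ w i) ^ q = alg (w.1 i) + alg (w.2 i) * β ^ q := by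
    intro w i
    show (alg (w.1 i) + alg (w.2 i) * β) ^ q = _
    rw [haddpow, hfixF, mul_pow, hfixF]
  set S : ((Fin n → F) × (Fin n → F)) → ((Fin n → F) × (Fin n → F)) → F :=
    fun w c => ∑ i, (c.1 i * w.2 i - w.1 i * c.2 i) with hSdef
  have hrel : ∀ w c, H (φ w) (φ c) - H (φ c) (φ w) = (β ^ q - β) * alg (S w c) := by
    intro w c
    rw [hSdef, hH]
    simp only
    rw [← Finset.sum_sub_distrib, map_sum, Finset.mul_sum]
    apply Finset.sum_congr rfl
    intro i _
    rw [hφpow, hφpow]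
    show _ - _ * (alg (w.1 i) + alg (w.2 i) * β) = _
    rw [show φ c i = alg (c.1 i) + alg (c.2 i) * β from rfl, map_sub, map_mul, map_mul]
    ring
  have htrS : ∀ w c, trSympForm p w c = Algebra.trace (ZMod p) F (S w c) := fun w c => rfl
  -- F-linearity of C
  have hlin : ∀ (a : F), ∀ w ∈ C, a • w ∈ C := by
    intro a w hw
    rw [hCpre] at hw ⊢
    show φ (a • w) ∈ (↑X : Set (Fin n → K))
    have hsm : φ (a • w) = alg a • φ w := by
      funext i
      show alg ((a • w).1 i) + alg ((a • w).2 i) * β = alg a • φ w i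
      rw [show (a • w).1 i = a * w.1 i from rfl, show (a • w).2 i = a * w.2 i from rfl,
        map_mul, map_mul, smul_eq_mul, show φ w i = alg (w.1 i) + alg (w.2 i) * β from rfl]
      ring
    rw [hsm]
    exact X.smul_mem _ hw
  -- the key duality
  have hdualeq : sympDual p C = φ ⁻¹' (hermDual q (↑X : Set (Fin n → K))) := by
    ext w
    simp only [sympDual, Set.mem_setOf_eq, Set.mem_preimage, hermDual]
    constructor
    · intro hw
      have hS0 : ∀ c ∈ C, S w c = 0 := by
        intro c hc
        apply aux_trace_nondeg p hp F
        intro a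
        have hac : a • c ∈ C := hlin a c hc
        have h1 := hw (a • c) hac
        rw [htrS] at h1
        have hsm : S w (a • c) = a * S w c := by
          rw [hSdef]
          simp only
          rw [Finset.mul_sum]
          apply Finset.sum_congr rfl
          intro i _
          rw [show (a • c).1 i = a * c.1 i from rfl, show (a • c).2 i = a * c.2 i from rfl]
          ring
        rw [hsm] at h1
        exact h1
      have hsym0 : ∀ c' ∈ C, H (φ w) (φ c') = H (φ c') (φ w) := by
        intro c' hc'
        have := hrel w c'
        rw [hS0 c' hc', map_zero, mul_zero, sub_eq_zero] at this
        exact this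
      intro y hy
      obtain ⟨c, rfl⟩ := hφsurj y
      have hcC : c ∈ C := by rw [hCpre]; exact hy
      obtain ⟨c2, hc2⟩ := hφsurj (β • φ c)
      have hc2C : c2 ∈ C := by
        rw [hCpre]
        show φ c2 ∈ (↑X : Set (Fin n → K))
        rw [hc2]
        exact X.smul_mem β hy
      have e1 := hsym0 c hcC
      have e2 := hsym0 c2 hc2C
      rw [hc2] at e2
      have l1 : H (φ w) (β • φ c) = β * H (φ w) (φ c) := by
        rw [hH]
        simp only
        rw [Finset.mul_sum]
        apply Finset.sum_congr rfl
        intro i _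
        rw [Pi.smul_apply, smul_eq_mul]
        ring
      have l2 : H (β • φ c) (φ w) = β ^ q * H (φ c) (φ w) := by
        rw [hH]
        simp only
        rw [Finset.mul_sum]
        apply Finset.sum_congr rfl
        intro i _
        rw [Pi.smul_apply, smul_eq_mul, mul_pow]
        ring
      rw [l1, l2, ← e1] at e2
      have h3 : (β - β ^ q) * H (φ w) (φ c) = 0 := by
        rw [sub_mul, e2, sub_self]
      have hne : β - β ^ q ≠ 0 := sub_ne_zero.mpr (Ne.symm hβq)
      exact (mul_eq_zero.mp h3).resolve_left hne
    · intro hyd c hc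
      have h1 : H (φ w) (φ c) = 0 := hyd (φ c) (by rw [hCpre] at hc; exact hc)
      have h2 : H (φ c) (φ w) = 0 := (hHzero _ _).mp h1
      have h3 : (β ^ q - β) * alg (S w c) = 0 := by rw [← hrel, h1, h2, sub_zero]
      have hne : β ^ q - β ≠ 0 := sub_ne_zero.mpr hβq
      have h4 : alg (S w c) = 0 := (mul_eq_zero.mp h3).resolve_left hne
      have h5 : S w c = 0 := by
        apply (algebraMap F K).injective
        rw [map_zero]; exact h4
      rw [htrS, h5, map_zero]
  -- self-orthogonality
  have hso : C ⊆ sympDual p C := by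
    intro w hw
    rw [hdualeq]
    exact hX (by rw [hCpre] at hw; exact hw)
  -- cardinality
  have hncard : Nat.card C = Nat.card X := by
    have h1 : (↑X : Set (Fin n → K)) = φ '' C := by
      rw [hCpre, Set.image_preimage_eq _ hφsurj]
    calc Nat.card C = C.ncard := Nat.card_coe_set_eq C
      _ = (φ '' C).ncard := (Set.ncard_image_of_injective C hφinj).symm
      _ = (↑X : Set (Fin n → K)).ncard := by rw [← h1]
      _ = Nat.card X := (Nat.card_coe_set_eq _).symm
  -- weights
  have hwteq : ∀ w, swt w = hwt (φ w) := by
    intro w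
    unfold swt hwt
    congr 1
    ext i
    simp only [Set.mem_setOf_eq]
    exact (not_congr (hφ0 (w.1 i) (w.2 i))).symm
  have himg : ∀ T : Set (Fin n → K), swt '' (φ ⁻¹' T \ {0}) = hwt '' (T \ {0}) := by
    intro T
    have hpre0 : φ ⁻¹' T \ {0} = φ ⁻¹' (T \ {0}) := by
      rw [Set.preimage_diff]
      congr 1
      ext w
      simp only [Set.mem_preimage, Set.mem_singleton_iff]
      constructor
      · rintro rfl
        exact hφzero
      · intro hw
        apply hφinj
        rw [hw, hφzero]
    rw [hpre0]
    have h2 : swt '' (φ ⁻¹' (T \ {0})) = (hwt ∘ φ) '' (φ ⁻¹' (T \ {0})) :=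
      Set.image_congr fun w _ => hwteq w
    rw [h2, Set.image_comp, Set.image_preimage_eq _ hφsurj]
  refine ⟨hlin, hso, hncard, ?_, ?_⟩
  · unfold minSwt minHwt
    rw [hdualeq, hCpre, ← Set.preimage_diff, himg]
  · unfold minSwt minHwt
    rw [hCpre, himg]
end
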